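/- Let B be a set of parameters and let [a] be the connected component of an element a in an ∅-definable graph G. Then [a] ∈ dcl^∨(B) if and only if there is a formula φ(x) ∈ tp(a/B) and n ∈ ℕ such that the G-diameter of φ(M) is at most n. Moreover, [a] ∈ acl^∨(B) if and only if there is a formula ψ(x) ∈ tp(a/B) over B that intersects only finitely many connected G-components, which are precisely the conjugates of [a] under Aut(M/B). -/

import Mathlib

set_option autoImplicit false

open FirstOrder FirstOrder.Language Set Cardinal

namespace Paper

/-- The cardinality `|T|` of the theory: the cardinality of the language plus `ℵ₀`. -/
noncomputable def theoryCard (L : FirstOrder.Language.{0,0}) : Cardinal :=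
  L.card + Cardinal.aleph0

variable (L : FirstOrder.Language.{0,0}) (M : Type) [L.Structure M]

/-- `a` and `b` have the same type over the parameter set `A`. -/
def EqTp (A : Set M) {γ : Type} (a b : γ → M) : Prop :=
  ∀ φ : L.Formula (↥A ⊕ γ),
    φ.Realize (Sum.elim Subtype.val a) ↔ φ.Realize (Sum.elim Subtype.val b)

/-- A formula with parameters from `M` is over the set `B`. -/
def FormulaOver (B : Set M) {γ : Type} (φ : L.Formula (M ⊕ γ)) : Prop :=
  ∃ ψ : L.Formula (↥B ⊕ γ), ψ.relabel (Sum.map Subtype.val id) = φ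

/-- A complete global type (in variables indexed by `γ`): a maximal set of formulas with
parameters in the monster model which is finitely satisfiable in it. -/
def IsGlobalType {γ : Type} (p : Set (L.Formula (M ⊕ γ))) : Prop :=
  (∀ s : Finset (L.Formula (M ⊕ γ)), ↑s ⊆ p →
    ∃ v : γ → M, ∀ φ ∈ s, φ.Realize (Sum.elim id v)) ∧
  (∀ φ : L.Formula (M ⊕ γ), φ ∈ p ∨ BoundedFormula.not φ ∈ p)

/-- `a` realizes the restriction `p ↾ B` of the set of formulas `p` to the parameter set `B`. -/
def RealizesRes {γ : Type} (p : Set (L.Formula (M ⊕ γ))) (B : Set M) (a : γ → M) : Prop :=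
  ∀ φ ∈ p, FormulaOver L M B φ → φ.Realize (Sum.elim id a)

/-- The automorphism `σ` fixes `A` pointwise. -/
def FixesPointwise (A : Set M) (σ : M ≃[L] M) : Prop := ∀ x ∈ A, σ x = x

/-- The global type `p` is `Aut(M/A)`-invariant. -/
def InvariantOver {γ : Type} (p : Set (L.Formula (M ⊕ γ))) (A : Set M) : Prop :=
  ∀ σ : M ≃[L] M, FixesPointwise L M A σ →
    ∀ φ : L.Formula (M ⊕ γ), φ ∈ p ↔ φ.relabel (Sum.map (fun x => σ x) id) ∈ p

/-- Definable closure. -/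
def dcl (A : Set M) : Set M :=
  {x | ∃ φ : L.Formula (↥A ⊕ Unit),
    ∀ y : M, (φ.Realize (Sum.elim Subtype.val fun _ => y) ↔ y = x)}

/-- Algebraic closure. -/
def acl (A : Set M) : Set M :=
  {x | ∃ φ : L.Formula (↥A ⊕ Unit),
    {y : M | φ.Realize (Sum.elim Subtype.val fun _ => y)}.Finite ∧
    φ.Realize (Sum.elim Subtype.val fun _ => x)}

/-- The tuple `e` is in the definable closure of `A`. -/
def InDclT {n : ℕ} (A : Set M) (e : Fin n → M) : Prop :=
  ∃ φ : L.Formula (↥A ⊕ Fin n),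
    ∀ y : Fin n → M, (φ.Realize (Sum.elim Subtype.val y) ↔ y = e)

/-- `M` is a monster model (with respect to the bound `κ`): it is `κ`-saturated and strongly
`κ`-homogeneous. -/
structure IsMonster (κ : Cardinal) : Prop where
  saturated : ∀ A : Set M, #A < κ → ∀ (n : ℕ) (p : Set (L.Formula (↥A ⊕ Fin n))),
    (∀ s : Finset (L.Formula (↥A ⊕ Fin n)), ↑s ⊆ p →
      ∃ v : Fin n → M, ∀ φ ∈ s, φ.Realize (Sum.elim Subtype.val v)) →
    ∃ v : Fin n → M, ∀ φ ∈ p, φ.Realize (Sum.elim Subtype.val v)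
  homogeneous : ∀ (A : Set M) (β : Type) (a b : β → M), #A < κ → #β < κ →
    EqTp L M A a b →
    ∃ σ : M ≃[L] M, FixesPointwise L M A σ ∧ ∀ i, σ (a i) = b i

/-- The instance `φ(x, b)` divides over `A`:  there are `b_i ≡_A b` such that
`{φ(x,b_i) : i < ω}` is `k`-inconsistent. -/
def DividesOver {γ β : Type} (φ : L.Formula (γ ⊕ β)) (b : β → M) (A : Set M) : Prop :=
  ∃ (bs : ℕ → β → M) (k : ℕ), 0 < k ∧ (∀ i, EqTp L M A (bs i) b) ∧
    ∀ s : Finset ℕ, s.card = k →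
      ¬ ∃ x : γ → M, ∀ i ∈ s, φ.Realize (Sum.elim x (bs i))

/-- `tp(a/B)` divides over `A`. -/
def TpDividesOver {γ : Type} (a : γ → M) (B A : Set M) : Prop :=
  ∃ (n : ℕ) (φ : L.Formula (γ ⊕ Fin n)) (b : Fin n → M),
    (∀ i, b i ∈ B) ∧ φ.Realize (Sum.elim a b) ∧ DividesOver L M φ b A

/-- `tp(a/B)` forks over `A`: some formula of it implies a finite disjunction of formulas,
each of which divides over `A`. -/
def TpForksOver {γ : Type} (a : γ → M) (B A : Set M) : Prop :=
  ∃ (n : ℕ) (φ : L.Formula (γ ⊕ Fin n)) (b : Fin n → M),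
    (∀ i, b i ∈ B) ∧ φ.Realize (Sum.elim a b) ∧
    ∃ (m : ℕ) (k : Fin m → ℕ) (ψ : (j : Fin m) → L.Formula (γ ⊕ Fin (k j)))
      (c : (j : Fin m) → Fin (k j) → M),
      (∀ j, DividesOver L M (ψ j) (c j) A) ∧
      ∀ x : γ → M, φ.Realize (Sum.elim x b) → ∃ j, (ψ j).Realize (Sum.elim x (c j))

/-- The set `X` is forking-independent from the set `Y` over `A` (every finite tuple from `X`
has a type over `A ∪ Y` which does not fork over `A`). -/
def SetForkIndep (X Y A : Set M) : Prop :=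
  ∀ (n : ℕ) (x : Fin n → M), (∀ i, x i ∈ X) → ¬ TpForksOver L M x (A ∪ Y) A

/-- A sequence of tuples, indexed by the order `(I, r)`, is indiscernible over `A`. -/
def Indiscernible (A : Set M) {I γ : Type} (r : I → I → Prop) (b : I → γ → M) : Prop :=
  ∀ (n : ℕ) (s t : Fin n → I),
    (∀ i j : Fin n, i < j → r (s i) (s j)) →
    (∀ i j : Fin n, i < j → r (t i) (t j)) →
    EqTp L M A (fun q : Fin n × γ => b (s q.1) q.2) (fun q : Fin n × γ => b (t q.1) q.2)

/-- The set of coordinates of the tuples appearing strictly before index `i`. -/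
def seqBefore (M : Type) {I γ : Type} (r : I → I → Prop) (b : I → γ → M) (i : I) : Set M :=
  ⋃ j ∈ {j : I | r j i}, Set.range (b j)

/-- `(e_i)_{i ∈ I}` is a Morley sequence of `p` over `A` : `e_i ⊨ p ↾ (A e_{<i})`. -/
def MorleySeqOver {γ I : Type} (p : Set (L.Formula (M ⊕ γ))) (A : Set M)
    (r : I → I → Prop) (e : I → γ → M) : Prop :=
  ∀ i : I, RealizesRes L M p (A ∪ seqBefore M r e i) (e i)

/-- A family of tuples is `acl`-independent over `B`. -/
def AclIndepFamily (B : Set M) {I γ : Type} (b : I → γ → M) : Prop :=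
  ∀ J J' : Set I, Disjoint J J' →
    acl L M (B ∪ ⋃ j ∈ J, Set.range (b j)) ∩ acl L M (B ∪ ⋃ j ∈ J', Set.range (b j))
      ⊆ acl L M B

/-- The global type `p` is generically stable over `A`. -/
def GenericallyStable {γ : Type} (p : Set (L.Formula (M ⊕ γ))) (A : Set M) : Prop :=
  InvariantOver L M p A ∧
  ∀ (I : Type) (r : I → I → Prop), IsWellOrder I r → Infinite I →
    ∀ e : I → γ → M, MorleySeqOver L M p A r e →
      ∀ φ : L.Formula (M ⊕ γ),
        {i : I | φ.Realize (Sum.elim id (e i))}.Finite ∨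
        {i : I | ¬ φ.Realize (Sum.elim id (e i))}.Finite

/-- `d = (d_0, …, d_{n-1})` realizes the restriction `p^{⊗n} ↾ B`. -/
def RealizesTensorRes {γ : Type} (p : Set (L.Formula (M ⊕ γ))) (B : Set M)
    {n : ℕ} (d : Fin n → γ → M) : Prop :=
  ∀ i : Fin n, RealizesRes L M p (B ∪ ⋃ j ∈ {j : Fin n | j < i}, Set.range (d j)) (d i)

/-- The tensor power `p^{⊗n}` is generically stable over `A`. -/
def TensorGenStable {γ : Type} (p : Set (L.Formula (M ⊕ γ))) (A : Set M) (n : ℕ) : Prop :=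
  ∀ (I : Type) (r : I → I → Prop), IsWellOrder I r → Infinite I →
    ∀ d : I → Fin n → γ → M,
      (∀ i : I, RealizesTensorRes L M p
        (A ∪ ⋃ j ∈ {j : I | r j i}, ⋃ k : Fin n, Set.range (d j k)) (d i)) →
      ∀ φ : L.Formula (M ⊕ (Fin n × γ)),
        {i : I | φ.Realize (Sum.elim id fun q => d i q.1 q.2)}.Finite ∨
        {i : I | ¬ φ.Realize (Sum.elim id fun q => d i q.1 q.2)}.Finite

/-- `a ⫝^p_A b` : for every `d̄ ⊨ p^{⊗n}↾A` there is `d̄' ≡_{Aa} d̄` with `d̄' ⊨ p^{⊗n}↾Ab`. -/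
def PIndep {γ α β : Type} (p : Set (L.Formula (M ⊕ γ))) (A : Set M)
    (a : α → M) (b : β → M) : Prop :=
  ∀ (n : ℕ) (d : Fin n → γ → M), RealizesTensorRes L M p A d →
    ∃ d' : Fin n → γ → M,
      EqTp L M (A ∪ Set.range a) (fun q : Fin n × γ => d q.1 q.2)
        (fun q : Fin n × γ => d' q.1 q.2) ∧
      RealizesTensorRes L M p (A ∪ Set.range b) d'

/-- A partial type (with parameters in `M`) is ind-definable over `A`. -/
def IndDefinableOver {γ : Type} (π : Set (L.Formula (M ⊕ γ))) (A : Set M) : Prop :=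
  ∀ (n : ℕ) (φ : L.Formula (Fin n ⊕ γ)),
    ∃ (ι : Type) (S : ι → Set (Fin n → M)),
      (∀ i, Set.Definable A L (S i)) ∧
      {b : Fin n → M |
        φ.relabel (Sum.elim (fun i => (Sum.inl (b i) : M ⊕ γ)) Sum.inr) ∈ π} = ⋃ i, S i

/-- A partial type is generically stable over `A`. -/
def GSPartialType {γ : Type} (π : Set (L.Formula (M ⊕ γ))) (A : Set M) : Prop :=
  IndDefinableOver L M π A ∧
  ∀ a : ℕ → γ → M,
    (∀ k : ℕ, RealizesRes L M π (A ∪ ⋃ j ∈ {j : ℕ | j < k}, Set.range (a j)) (a k)) →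
    ∀ φ ∈ π, {k : ℕ | ¬ φ.Realize (Sum.elim id (a k))}.Finite

/-- `a ⫝^{GS}_A b`. -/
def GSIndep {α β : Type} (A : Set M) (a : α → M) (b : β → M) : Prop :=
  ∀ π : Set (L.Formula (M ⊕ β)), GSPartialType L M π A →
    RealizesRes L M π A b → RealizesRes L M π (A ∪ Set.range a) b

/-- An `∅`-definable graph. -/
structure ZeroDefGraph : Type where
  V : Set M
  E : Set (M × M)
  defV : Set.Definable₁ (∅ : Set M) L V
  defE : Set.Definable₂ (∅ : Set M) L E

/-- There is a path of length `n` between `x` and `y` in the graph `G`. -/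
def GPath (G : ZeroDefGraph L M) (n : ℕ) (x y : M) : Prop :=
  ∃ f : ℕ → M, f 0 = x ∧ f n = y ∧ (∀ i ≤ n, f i ∈ G.V) ∧
    ∀ i < n, ((f i, f (i+1)) ∈ G.E ∨ (f (i+1), f i) ∈ G.E)

/-- `dist_G(x,y) ≤ n`. -/
def DistLe (G : ZeroDefGraph L M) (n : ℕ) (x y : M) : Prop := ∃ m ≤ n, GPath L M G m x y

/-- `x` and `y` lie in the same connected component of `G`. -/
def SameComp (G : ZeroDefGraph L M) (x y : M) : Prop := ∃ n : ℕ, GPath L M G n x y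

/-- The connected component `[a]` of `G` is `∨`-definable over `B`. -/
def VDef (G : ZeroDefGraph L M) (B : Set M) (a : M) : Prop :=
  ∀ σ : M ≃[L] M, FixesPointwise L M B σ → SameComp L M G a (σ a)

/-- The connected component `[a]` of `G` is `∨`-algebraic over `B`. -/
def VAlg (G : ZeroDefGraph L M) (B : Set M) (a : M) : Prop :=
  ∃ (n : ℕ) (c : Fin n → M), ∀ σ : M ≃[L] M, FixesPointwise L M B σ →
    ∃ i, SameComp L M G (σ a) (c i)

/-- `a ⫝^{acl∨}_A b` : `acl^∨(Aa) ∩ acl^∨(Ab) = acl^∨(A)`. -/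
def AclVIndep (A : Set M) {α β : Type} (a : α → M) (b : β → M) : Prop :=
  ∀ (G : ZeroDefGraph L M) (x : M), x ∈ G.V →
    ((VAlg L M G (A ∪ Set.range a) x ∧ VAlg L M G (A ∪ Set.range b) x) ↔ VAlg L M G A x)

/-- `a ⫝^{dcl∨}_A b` : `dcl^∨(Aa) ∩ dcl^∨(Ab) ⊆ dcl^∨(A)`. -/
def DclVIndep (A : Set M) {α β : Type} (a : α → M) (b : β → M) : Prop :=
  ∀ (G : ZeroDefGraph L M) (x : M), x ∈ G.V →
    VDef L M G (A ∪ Set.range a) x → VDef L M G (A ∪ Set.range b) x → VDef L M G A x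

/-- `a ⫝^{acl}_A b` : `acl(Aa) ∩ acl(Ab) ⊆ acl(A)`. -/
def AclIndepPair (A : Set M) {α β : Type} (a : α → M) (b : β → M) : Prop :=
  acl L M (A ∪ Set.range a) ∩ acl L M (A ∪ Set.range b) ⊆ acl L M A

/-- A subset `D ⊆ M` is stable: no formula has the order property on `D`. -/
def StableSet1 (D : Set M) : Prop :=
  ∀ (j l : ℕ) (φ : L.Formula (M ⊕ (Fin j ⊕ Fin l))),
    ¬ ∃ (a : ℕ → Fin j → M) (b : ℕ → Fin l → M),
      (∀ i r, a i r ∈ D) ∧ (∀ i r, b i r ∈ D) ∧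
      ∀ i k : ℕ, (φ.Realize (Sum.elim id (Sum.elim (a i) (b k))) ↔ i < k)

/-- The theory is stable. -/
def IsStableTheory : Prop := StableSet1 L M Set.univ

/-- A subset `D ⊆ M^n` is stable: no formula has the order property on `D`. -/
def StableSetT {n : ℕ} (D : Set (Fin n → M)) : Prop :=
  ∀ (j l : ℕ) (φ : L.Formula (M ⊕ ((Fin j × Fin n) ⊕ (Fin l × Fin n)))),
    ¬ ∃ (a : ℕ → Fin j → Fin n → M) (b : ℕ → Fin l → Fin n → M),
      (∀ i r, a i r ∈ D) ∧ (∀ i r, b i r ∈ D) ∧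
      ∀ i k : ℕ,
        (φ.Realize (Sum.elim id
          (Sum.elim (fun q => a i q.1 q.2) (fun q => b k q.1 q.2))) ↔ i < k)

/-- The set of coordinates of the tuples in `D`. -/
def coordsOf (M : Type) {n : ℕ} (D : Set (Fin n → M)) : Set M := {x | ∃ v ∈ D, ∃ i, v i = x}

/-- A `C`-definable subset `D ⊆ M` is stably embedded: every `M`-definable subset of a power of
`D` coincides on `D` with one definable with parameters from `D ∪ C`. -/
def StablyEmbedded1 (C : Set M) (D : Set M) : Prop :=
  ∀ (n : ℕ) (S : Set (Fin n → M)), Set.Definable (Set.univ : Set M) L S →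
    ∃ S' : Set (Fin n → M), Set.Definable (D ∪ C) L S' ∧
      ∀ v : Fin n → M, (∀ i, v i ∈ D) → (v ∈ S ↔ v ∈ S')

/-- A `C`-definable subset `D ⊆ M^m` is stably embedded. -/
def StablyEmbeddedT (C : Set M) {m : ℕ} (D : Set (Fin m → M)) : Prop :=
  ∀ (j : ℕ) (S : Set (Fin j × Fin m → M)), Set.Definable (Set.univ : Set M) L S →
    ∃ S' : Set (Fin j × Fin m → M), Set.Definable (coordsOf M D ∪ C) L S' ∧
      ∀ v : Fin j × Fin m → M, (∀ q : Fin j, (fun i => v (q, i)) ∈ D) → (v ∈ S ↔ v ∈ S')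

/-- `D` is a sort of the stable part `St_B` : a `B`-definable, stable and stably embedded set. -/
def stSort (B : Set M) {m : ℕ} (D : Set (Fin m → M)) : Prop :=
  Set.Definable B L D ∧ StableSetT L M D ∧ StablyEmbeddedT L M B D

/-- `y` is an element of a `B`-definable, stable, stably embedded subset of `M`. -/
def inStPart1 (B : Set M) (y : M) : Prop :=
  ∃ D : Set M, Set.Definable₁ B L D ∧ StableSet1 L M D ∧ StablyEmbedded1 L M B D ∧ y ∈ D

/-- The coordinates of `St_B(C)`: coordinates of tuples lying in a sort of `St_B` and belonging
to `dcl(B ∪ C)`. -/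
def stPartOf (B C : Set M) : Set M :=
  {x | ∃ (m : ℕ) (D : Set (Fin m → M)) (e : Fin m → M) (i : Fin m),
    stSort L M B D ∧ e ∈ D ∧ InDclT L M (B ∪ C) e ∧ e i = x}

/-- `X` is internal to `Lset`. -/
def InternalTo (Lset X : Set M) : Prop :=
  X = ∅ ∨ ∃ (m : ℕ) (R : Set (Fin (m+1) → M)), Set.Definable (Set.univ : Set M) L R ∧
    (∀ w : Fin m → M, (∀ i, w i ∈ Lset) → ∃! y : M, Fin.snoc w y ∈ R) ∧
    (∀ (w : Fin m → M) (y : M), (∀ i, w i ∈ Lset) → Fin.snoc w y ∈ R → y ∈ X) ∧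
    (∀ x ∈ X, ∃ w : Fin m → M, (∀ i, w i ∈ Lset) ∧ Fin.snoc w x ∈ R)

/-- `Int(Lset, A)`: the union of the `A`-definable sets internal to `Lset`. -/
def IntUnion (Lset A : Set M) : Set M :=
  {x | ∃ X : Set M, Set.Definable₁ A L X ∧ InternalTo L M Lset X ∧ x ∈ X}

/-- A pro-`B`-definable map (a family of `B`-definable partial functions). -/
structure ProStMap (B : Set M) (γ : Type) : Type 1 where
  ι : Type
  m : ι → ℕ
  graph : (i : ι) → L.Formula (↥B ⊕ (γ ⊕ Fin (m i)))

/-- The pro-definable map is defined at `a`. -/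
def ProStMapDefinedAt {B : Set M} {γ : Type} (f : ProStMap L M B γ) (a : γ → M) : Prop :=
  ∀ i, ∃! y : Fin (f.m i) → M, (f.graph i).Realize (Sum.elim Subtype.val (Sum.elim a y))

/-- The values of the pro-definable map at `a` lie in sorts of `St_B`. -/
def ProStMapIntoSt {B : Set M} {γ : Type} (f : ProStMap L M B γ) (a : γ → M) : Prop :=
  ∀ (i : f.ι) (y : Fin (f.m i) → M),
    (f.graph i).Realize (Sum.elim Subtype.val (Sum.elim a y)) →
    ∃ D : Set (Fin (f.m i) → M), stSort L M B D ∧ y ∈ D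

/-- The set of coordinates of the value `f(a)`. -/
def ProStMapImage {B : Set M} {γ : Type} (f : ProStMap L M B γ) (a : γ → M) : Set M :=
  {x | ∃ (i : f.ι) (y : Fin (f.m i) → M) (j : Fin (f.m i)),
    (f.graph i).Realize (Sum.elim Subtype.val (Sum.elim a y)) ∧ y j = x}

/-- The type `tp(a/B)` is stably dominated : there is a pro-`B`-definable map `f` into `St_B`
such that for every tuple `d`, if `St_B(d) ⫝_B f(a)` then `tp(d/B f(a)) ⊢ tp(d/B a)`. -/
def StablyDominatedTp {γ : Type} (B : Set M) (a : γ → M) : Prop :=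
  ∃ f : ProStMap L M B γ,
    (∀ a' : γ → M, EqTp L M B a a' →
      ProStMapDefinedAt L M f a' ∧ ProStMapIntoSt L M f a') ∧
    ∀ a' : γ → M, EqTp L M B a a' →
      ∀ (δ : Type) (d : δ → M),
        SetForkIndep L M (stPartOf L M B (Set.range d)) (ProStMapImage L M f a') B →
        ∀ d' : δ → M,
          EqTp L M (B ∪ ProStMapImage L M f a') d d' →
          EqTp L M (B ∪ Set.range a') d d'

/-- The global type `p` is stably dominated over `B` : `p ↾ B` is stably dominated. -/
def StablyDominatedOver {γ : Type} (p : Set (L.Formula (M ⊕ γ))) (B : Set M) : Prop :=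
  ∀ a : γ → M, RealizesRes L M p B a → StablyDominatedTp L M B a

/-- Existential quantification over a `Unit` variable of a formula. -/
def exUnit {α : Type} (φ : L.Formula (α ⊕ Unit)) : L.Formula α :=
  BoundedFormula.ex (BoundedFormula.relabel (Sum.map id fun _ => (0 : Fin 1)) φ)

/-- Conjunction of formulas. -/
def fconj {α : Type} (φ ψ : L.Formula α) : L.Formula α :=
  BoundedFormula.not (BoundedFormula.imp φ (BoundedFormula.not ψ))

/-- The formula `∃ y (F(x,y) ∧ ψ(y))` expressing that the pushforward of the graph `F`
satisfies `ψ`. -/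
def pushFormula {γ P Q : Type} (embP : P → M) (embQ : Q → M)
    (F : L.Formula (P ⊕ (γ ⊕ Unit))) (ψ : L.Formula (Q ⊕ Unit)) : L.Formula (M ⊕ γ) :=
  exUnit L (fconj L
    (F.relabel (Sum.elim (fun x => (Sum.inl (Sum.inl (embP x)) : (M ⊕ γ) ⊕ Unit))
      (Sum.elim (fun g => Sum.inl (Sum.inr g)) Sum.inr)))
    (ψ.relabel (Sum.elim (fun x => (Sum.inl (Sum.inl (embQ x)) : (M ⊕ γ) ⊕ Unit)) Sum.inr)))

/-- `c` is the value at `a` of the definable function with graph `F`. -/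
def FunVal {γ P : Type} (embP : P → M) (F : L.Formula (P ⊕ (γ ⊕ Unit)))
    (a : γ → M) (c : M) : Prop :=
  F.Realize (Sum.elim embP (Sum.elim a fun _ => c))

/-- `c` realizes the restriction to `C` of the pushforward `F_*(p)`. -/
def PushRes {γ P : Type} (p : Set (L.Formula (M ⊕ γ))) (embP : P → M)
    (F : L.Formula (P ⊕ (γ ⊕ Unit))) (C : Set M) (c : M) : Prop :=
  ∀ ψ : L.Formula (↥C ⊕ Unit),
    pushFormula L M embP Subtype.val F ψ ∈ p →
    ψ.Realize (Sum.elim Subtype.val fun _ : Unit => c)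

/-- `p` is dominated over `B` by the definable function with graph `F` : for any `a ⊨ p↾A` and
any tuple `d`, if `f(a) ⊨ f_*(p)↾Bd` then `a ⊨ p↾Bd`. -/
def DominatedBy {γ P : Type} (p : Set (L.Formula (M ⊕ γ))) (A B : Set M)
    (embP : P → M) (F : L.Formula (P ⊕ (γ ⊕ Unit))) : Prop :=
  ∀ a : γ → M, RealizesRes L M p A a →
    ∀ (δ : Type) (d : δ → M) (c : M),
      FunVal L M embP F a c →
      PushRes L M p embP F (B ∪ Set.range d) c →
      RealizesRes L M p (B ∪ Set.range d) a

/-- The theory is NIP. -/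
def IsNIP : Prop :=
  ¬ ∃ (n m : ℕ) (φ : L.Formula (M ⊕ (Fin n ⊕ Fin m)))
      (a : ℕ → Fin n → M) (b : Set ℕ → Fin m → M),
      ∀ (i : ℕ) (S : Set ℕ),
        (φ.Realize (Sum.elim id (Sum.elim (a i) (b S))) ↔ i ∈ S)

/-- The theory eliminates imaginaries: every `M`-definable set has a code. -/
def ElimImaginaries : Prop :=
  ∀ (n : ℕ) (S : Set (Fin n → M)), Set.Definable (Set.univ : Set M) L S →
    ∃ (k : ℕ) (c : Fin k → M), ∀ σ : M ≃[L] M,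
      ((∀ v : Fin n → M, v ∈ S ↔ (fun i => σ (v i)) ∈ S) ↔ ∀ j, σ (c j) = c j)

/-- The theory has the bounded stabilizing property. -/
def TheoryHasBS (κ : Cardinal) : Prop :=
  ∀ (A : Set M), #A < κ → ∀ (n : ℕ) (a : Fin n → M),
    ¬ ∃ (ι : Type) (r : ι → ι → Prop), IsWellOrder ι r ∧
        #ι = Order.succ (theoryCard L) ∧
        ∃ X : ι → Set M, (∀ i j, r i j → X i ⊂ X j) ∧
          ∀ i, dcl L M A ⊆ X i ∧ X i ⊆ dcl L M (A ∪ Set.range a) ∧ dcl L M (X i) = X i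

/-- The theory has the algebraic stabilizing property. -/
def TheoryHasABS (κ : Cardinal) : Prop :=
  ∀ (A : Set M), #A < κ → ∀ (n : ℕ) (a : Fin n → M),
    ¬ ∃ (ι : Type) (r : ι → ι → Prop), IsWellOrder ι r ∧
        #ι = Order.succ (theoryCard L) ∧
        ∃ X : ι → Set M, (∀ i j, r i j → X i ⊂ X j) ∧
          ∀ i, acl L M A ⊆ X i ∧ X i ⊆ acl L M (A ∪ Set.range a) ∧ acl L M (X i) = X i

/-- The `C`-definable set `Lset` has the bounded stabilizing property. -/
def SetHasBS (κ : Cardinal) (C Lset : Set M) : Prop :=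
  ∀ (A : Set M), C ⊆ A → #A < κ → ∀ (n : ℕ) (a : Fin n → M),
    ¬ ∃ (ι : Type) (r : ι → ι → Prop), IsWellOrder ι r ∧
        #ι = Order.succ (theoryCard L) ∧
        ∃ X : ι → Set M, (∀ i j, r i j → X i ⊂ X j) ∧
          ∀ i, (Lset ∩ dcl L M A ⊆ X i) ∧ (X i ⊆ Lset ∩ dcl L M (A ∪ Set.range a)) ∧
            (Lset ∩ dcl L M (A ∪ X i) = X i)

/-- The `C`-definable set `Lset` has the algebraic stabilizing property. -/
def SetHasABS (κ : Cardinal) (C Lset : Set M) : Prop :=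
  ∀ (A : Set M), C ⊆ A → #A < κ → ∀ (n : ℕ) (a : Fin n → M),
    ¬ ∃ (ι : Type) (r : ι → ι → Prop), IsWellOrder ι r ∧
        #ι = Order.succ (theoryCard L) ∧
        ∃ X : ι → Set M, (∀ i j, r i j → X i ⊂ X j) ∧
          ∀ i, (Lset ∩ acl L M A ⊆ X i) ∧ (X i ⊆ Lset ∩ acl L M (A ∪ Set.range a)) ∧
            (Lset ∩ acl L M (A ∪ X i) = X i)

/-- `φ(x,b)` strongly divides over `A`. -/
def StronglyDividesOver {γ β : Type} (φ : L.Formula (γ ⊕ β)) (b : β → M) (A : Set M) : Prop :=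
  (∃ i, b i ∉ acl L M A) ∧
  ∃ k : ℕ, 0 < k ∧
    ∀ bs : Fin k → β → M, (∀ i, EqTp L M A (bs i) b) →
      (∀ i j, i ≠ j → bs i ≠ bs j) →
      ¬ ∃ x : γ → M, ∀ i, φ.Realize (Sum.elim x (bs i))

/-- `φ(x,b)` þ-divides over `A`. -/
def ThornDividesOver {γ β : Type} (φ : L.Formula (γ ⊕ β)) (b : β → M) (A : Set M) : Prop :=
  ∃ (l : ℕ) (c : Fin l → M), StronglyDividesOver L M φ b (A ∪ Set.range c)

/-- `tp(a/B)` þ-forks over `A`. -/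
def TpThornForksOver {γ : Type} (a : γ → M) (B A : Set M) : Prop :=
  ∃ (n : ℕ) (φ : L.Formula (γ ⊕ Fin n)) (b : Fin n → M),
    (∀ i, b i ∈ B) ∧ φ.Realize (Sum.elim a b) ∧
    ∃ (m : ℕ) (k : Fin m → ℕ) (ψ : (j : Fin m) → L.Formula (γ ⊕ Fin (k j)))
      (c : (j : Fin m) → Fin (k j) → M),
      (∀ j, ThornDividesOver L M (ψ j) (c j) A) ∧
      ∀ x : γ → M, φ.Realize (Sum.elim x b) → ∃ j, (ψ j).Realize (Sum.elim x (c j))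

/-- The theory is rosy: þ-forking independence is a strict independence relation,
in particular it satisfies symmetry and local character. -/
def IsRosy : Prop :=
  (∀ (A : Set M) (na nb : ℕ) (a : Fin na → M) (b : Fin nb → M),
    (¬ TpThornForksOver L M a (A ∪ Set.range b) A) ↔
      (¬ TpThornForksOver L M b (A ∪ Set.range a) A)) ∧
  (∀ (n : ℕ) (a : Fin n → M) (B : Set M),
    ∃ A₀ : Set M, A₀ ⊆ B ∧ #A₀ ≤ theoryCard L ∧ ¬ TpThornForksOver L M a B A₀)

/-- The global type `p` is definable over `A`. -/
def DefinableTypeOver {γ : Type} (p : Set (L.Formula (M ⊕ γ))) (A : Set M) : Prop :=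
  ∀ (n : ℕ) (φ : L.Formula (Fin n ⊕ γ)),
    Set.Definable A L
      {b : Fin n → M | φ.relabel (Sum.elim (fun i => (Sum.inl (b i) : M ⊕ γ)) Sum.inr) ∈ p}

/-- The value of the `A`-definable family of functions with graph `G` at parameter `b` and
argument `a`. -/
def FamVal {γ : Type} {mb : ℕ} {A : Set M} (G : L.Formula (↥A ⊕ (Fin mb ⊕ (γ ⊕ Unit))))
    (b : Fin mb → M) (a : γ → M) (y : M) : Prop :=
  G.Realize (Sum.elim Subtype.val (Sum.elim b (Sum.elim a fun _ => y)))

/-- `f_{b₁}` and `f_{b₂}` have the same germ on `p`. -/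
def GermEq {γ : Type} {mb : ℕ} {A : Set M} (p : Set (L.Formula (M ⊕ γ)))
    (G : L.Formula (↥A ⊕ (Fin mb ⊕ (γ ⊕ Unit)))) (b₁ b₂ : Fin mb → M) : Prop :=
  ∀ a : γ → M, RealizesRes L M p (A ∪ Set.range b₁ ∪ Set.range b₂) a →
    ∀ y : M, (FamVal L M G b₁ a y ↔ FamVal L M G b₂ a y)

/-- The subtuple of a sequence of tuples indexed by a finite set of indices. -/
def subTup {K γ : Type} (M : Type) (b : K → γ → M) (J : Finset K) :
    {j // j ∈ J} × γ → M := fun q => b q.1.1 q.2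

/-- The row `𝐝_k` of a `ℤ × ℤ`-indexed sequence. -/
def rowTup {m : ℕ} (M : Type) (c : ℤ × ℤ → Fin m → M) (k : ℤ) : ℤ × Fin m → M :=
  fun q => c (k, q.1) q.2

/-- The tuple of rows `𝐝_I` of a `ℤ × ℤ`-indexed sequence. -/
def rowsTup {m : ℕ} (M : Type) (c : ℤ × ℤ → Fin m → M) (I : Finset ℤ) :
    {i // i ∈ I} × ℤ × Fin m → M :=
  fun q => c (q.1.1, q.2.1) q.2.2

section Aux

variable {L : FirstOrder.Language.{0,0}} {M : Type} [L.Structure M]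

lemma realize_fconj {α : Type} (φ ψ : L.Formula α) (v : α → M) :
    (fconj L φ ψ).Realize v ↔ φ.Realize v ∧ ψ.Realize v := by
  simp only [fconj, Formula.Realize, BoundedFormula.realize_not, BoundedFormula.realize_imp]
  tauto

/-- Conjunction of a finite set of formulas. -/
noncomputable def finconj {α β : Type} (s : Finset β) (f : β → L.Formula α) : L.Formula α :=
  BoundedFormula.iInf (fun b : s => f b)

lemma realize_finconj {α β : Type} (s : Finset β) (f : β → L.Formula α) (v : α → M) :
    Formula.Realize (finconj s f) v ↔ ∀ b ∈ s, (f b).Realize v := by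
  unfold finconj Formula.Realize
  rw [BoundedFormula.realize_iInf]
  exact ⟨fun h b hb => h ⟨b, hb⟩, fun h b => h b.1 b.2⟩

lemma sum_elim_comp_map {A A' C D : Type} {E : Type} (f : A → E) (v : C → E)
    (h : A' → A) (u : D → C) :
    (Sum.elim f v) ∘ (Sum.map h u) = Sum.elim (f ∘ h) (v ∘ u) := by
  funext x; cases x <;> simp

section Graph

variable {G : ZeroDefGraph L M}

lemma gpath_left_mem {n : ℕ} {x y : M} (h : GPath L M G n x y) : x ∈ G.V := by
  obtain ⟨f, h0, hn, hV, hE⟩ := h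
  simpa [h0] using hV 0 (Nat.zero_le _)

lemma gpath_right_mem {n : ℕ} {x y : M} (h : GPath L M G n x y) : y ∈ G.V := by
  obtain ⟨f, h0, hn, hV, hE⟩ := h
  simpa [hn] using hV n le_rfl

lemma sameComp_refl {x : M} (hx : x ∈ G.V) : SameComp L M G x x :=
  ⟨0, fun _ => x, rfl, rfl, fun _ _ => hx, fun i h => absurd h (Nat.not_lt_zero i)⟩

lemma gpath_symm {n : ℕ} {x y : M} (h : GPath L M G n x y) : GPath L M G n y x := by
  obtain ⟨f, h0, hn, hV, hE⟩ := h
  refine ⟨fun i => f (n - i), by simp [hn], by simp [h0], fun i hi => hV _ (Nat.sub_le _ _), ?_⟩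
  intro i hi
  have h1 : n - i = (n - (i+1)) + 1 := by omega
  have := hE (n - (i+1)) (by omega)
  show (f (n - i), f (n - (i+1))) ∈ G.E ∨ (f (n - (i+1)), f (n - i)) ∈ G.E
  rw [h1]
  tauto

lemma gpath_trans {n m : ℕ} {x y z : M} (h1 : GPath L M G n x y) (h2 : GPath L M G m y z) :
    GPath L M G (n + m) x z := by
  obtain ⟨f, hf0, hfn, hfV, hfE⟩ := h1
  obtain ⟨g, hg0, hgm, hgV, hgE⟩ := h2
  refine ⟨fun i => if i ≤ n then f i else g (i - n), by simp [hf0], ?_, ?_, ?_⟩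
  · by_cases hm : m = 0
    · simp only [hm, Nat.add_zero, le_refl, if_pos]
      rw [hfn, ← hg0, show (0:ℕ) = m from hm.symm, hgm]
    · simp only [if_neg (by omega : ¬ n + m ≤ n)]
      rw [show n + m - n = m by omega, hgm]
  · intro i hi
    by_cases h : i ≤ n
    · simp only [if_pos h]; exact hfV i h
    · simp only [if_neg h]; exact hgV (i - n) (by omega)
  · intro i hi
    by_cases h : i + 1 ≤ n
    · simp only [if_pos (by omega : i ≤ n), if_pos h]
      exact hfE i (by omega)
    · by_cases h' : i ≤ n
      · have hin : i = n := by omega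
        simp only [if_pos h', if_neg h]
        subst hin
        rw [show i + 1 - i = 1 by omega]
        have : f i = g 0 := by rw [hfn, hg0]
        rw [this]
        exact hgE 0 (by omega)
      · simp only [if_neg h', if_neg h]
        rw [show i + 1 - n = (i - n) + 1 by omega]
        exact hgE (i - n) (by omega)

lemma sameComp_symm {x y : M} (h : SameComp L M G x y) : SameComp L M G y x := by
  obtain ⟨n, hn⟩ := h; exact ⟨n, gpath_symm hn⟩

lemma sameComp_trans {x y z : M} (h1 : SameComp L M G x y) (h2 : SameComp L M G y z) :
    SameComp L M G x z := by
  obtain ⟨n, hn⟩ := h1; obtain ⟨m, hm⟩ := h2; exact ⟨n + m, gpath_trans hn hm⟩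

lemma sameComp_of_distLe {n : ℕ} {x y : M} (h : DistLe L M G n x y) : SameComp L M G x y := by
  obtain ⟨m, _, hm⟩ := h; exact ⟨m, hm⟩

lemma distLe_of_sameComp {x y : M} (h : SameComp L M G x y) : ∃ n, DistLe L M G n x y := by
  obtain ⟨n, hn⟩ := h; exact ⟨n, n, le_rfl, hn⟩

lemma distLe_mono {n m : ℕ} {x y : M} (hnm : n ≤ m) (h : DistLe L M G n x y) :
    DistLe L M G m x y := by
  obtain ⟨k, hk, hp⟩ := h; exact ⟨k, hk.trans hnm, hp⟩

lemma distLe_zero {x y : M} : DistLe L M G 0 x y ↔ x = y ∧ x ∈ G.V := by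
  constructor
  · rintro ⟨m, hm, f, h0, hn, hV, -⟩
    interval_cases m
    exact ⟨by rw [← h0, ← hn], by rw [← h0]; exact hV 0 le_rfl⟩
  · rintro ⟨rfl, hx⟩
    exact ⟨0, le_rfl, fun _ => x, rfl, rfl, fun _ _ => hx, fun i h => absurd h (Nat.not_lt_zero i)⟩

lemma distLe_succ {n : ℕ} {x y : M} :
    DistLe L M G (n+1) x y ↔
      DistLe L M G n x y ∨
      ∃ z, DistLe L M G n x z ∧ ((z, y) ∈ G.E ∨ (y, z) ∈ G.E) ∧ y ∈ G.V := by
  constructor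
  · rintro ⟨m, hm, f, h0, hn, hV, hE⟩
    rcases Nat.lt_or_ge m (n+1) with h | h
    · exact Or.inl ⟨m, by omega, f, h0, hn, hV, hE⟩
    · have hm' : m = n + 1 := by omega
      subst hm'
      refine Or.inr ⟨f n, ⟨n, le_rfl, f, h0, rfl, fun i hi => hV i (by omega),
        fun i hi => hE i (by omega)⟩, ?_, by rw [← hn]; exact hV (n+1) le_rfl⟩
      have := hE n (by omega)
      rw [hn] at this
      exact this
  · rintro (h | ⟨z, ⟨m, hm, f, h0, hn, hV, hE⟩, hedge, hy⟩)
    · exact distLe_mono (by omega) h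
    · refine ⟨m + 1, by omega, fun i => if i ≤ m then f i else y, by simp [h0], by
        simp only [if_neg (by omega : ¬ m + 1 ≤ m)], ?_, ?_⟩
      · intro i hi
        by_cases h' : i ≤ m
        · simp only [if_pos h']; exact hV i h'
        · simp only [if_neg h']; exact hy
      · intro i hi
        by_cases h' : i + 1 ≤ m
        · simp only [if_pos (by omega : i ≤ m), if_pos h']
          exact hE i (by omega)
        · have him : i = m := by omega
          subst him
          simp only [if_pos (le_refl i), if_neg h', hn]
          exact hedge

end Graph

end Aux
section Aux2

variable {L : FirstOrder.Language.{0,0}} {M : Type} [L.Structure M]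

/-- From definability over the empty set, extract a pure formula. -/
lemma pure_formula_of_definable_empty {α : Type} {s : Set (α → M)}
    (h : Set.Definable (∅ : Set M) L s) :
    ∃ φ : L.Formula α, ∀ v : α → M, φ.Realize v ↔ v ∈ s := by
  obtain ⟨φ, hφ⟩ := Set.definable_iff_exists_formula_sum.mp h
  refine ⟨φ.relabel (Sum.elim (fun e => absurd e.2 (Set.notMem_empty e.1)) id), fun v => ?_⟩
  rw [Formula.realize_relabel, hφ]
  simp only [Set.mem_setOf_eq]
  have : (v ∘ Sum.elim (fun e : ↥(∅ : Set M) => absurd e.2 (Set.notMem_empty e.1)) id)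
      = Sum.elim (fun e : ↥(∅ : Set M) => (e : M)) v := by
    funext x
    rcases x with e | c
    · exact absurd e.2 (Set.notMem_empty e.1)
    · rfl
  rw [this]

variable {G : ZeroDefGraph L M}

lemma distLe_definable (G : ZeroDefGraph L M) (n : ℕ) :
    Set.Definable (∅ : Set M) L {v : Fin 2 → M | DistLe L M G n (v 0) (v 1)} := by
  induction n with
  | zero =>
    have h1 : Set.Definable (∅ : Set M) L {v : Fin 2 → M | v 0 = v 1} := by
      refine ⟨FirstOrder.Language.Term.equal (FirstOrder.Language.Term.var 0)
        (FirstOrder.Language.Term.var 1), ?_⟩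
      ext v
      simp [Formula.realize_equal]
    have h2 : Set.Definable (∅ : Set M) L {v : Fin 2 → M | v 0 ∈ G.V} := by
      have := G.defV.preimage_comp (fun _ : Fin 1 => (0 : Fin 2))
      convert this using 1
      all_goals (ext v; simp [Set.preimage])
    have := h1.inter h2
    convert this using 1
    ext v
    simp only [Set.mem_setOf_eq, Set.mem_inter_iff, distLe_zero]
  | succ n ih =>
    have hT : Set.Definable (∅ : Set M)  L
        {w : Fin 3 → M | DistLe L M G n (w 0) (w 2) ∧
          ((w 2, w 1) ∈ G.E ∨ (w 1, w 2) ∈ G.E) ∧ w 1 ∈ G.V} := by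
      have hA : Set.Definable (∅ : Set M) L {w : Fin 3 → M | DistLe L M G n (w 0) (w 2)} := by
        have := ih.preimage_comp (![0, 2] : Fin 2 → Fin 3)
        convert this using 1
        all_goals (ext w; simp [Set.preimage])
      have hB : Set.Definable (∅ : Set M) L {w : Fin 3 → M | (w 2, w 1) ∈ G.E} := by
        have := G.defE.preimage_comp (![2, 1] : Fin 2 → Fin 3)
        convert this using 1
        all_goals (ext w; simp [Set.preimage])
      have hC : Set.Definable (∅ : Set M) L {w : Fin 3 → M | (w 1, w 2) ∈ G.E} := by
        have := G.defE.preimage_comp (![1, 2] : Fin 2 → Fin 3)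
        convert this using 1
        all_goals (ext w; simp [Set.preimage])
      have hD : Set.Definable (∅ : Set M) L {w : Fin 3 → M | w 1 ∈ G.V} := by
        have := G.defV.preimage_comp (fun _ : Fin 1 => (1 : Fin 3))
        convert this using 1
        all_goals (ext w; simp [Set.preimage])
      have := hA.inter ((hB.union hC).inter hD)
      convert this using 1
      all_goals (ext w; simp only [Set.mem_setOf_eq, Set.mem_inter_iff, Set.mem_union])
    have himg := hT.image_comp (fun i : Fin 2 => (i.castSucc : Fin 3))
    have := ih.union himg
    convert this using 1
    ext v
    simp only [Set.mem_setOf_eq, Set.mem_union, Set.mem_image, distLe_succ]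
    constructor
    · rintro (h | ⟨z, hz, hedge, hv⟩)
      · exact Or.inl h
      · refine Or.inr ⟨![v 0, v 1, z], ⟨by simpa using hz, by simpa using hedge,
          by simpa using hv⟩, ?_⟩
        funext i
        fin_cases i <;> simp
    · rintro (h | ⟨w, ⟨h1, h2, h3⟩, rfl⟩)
      · exact Or.inl h
      · exact Or.inr ⟨w 2, by simpa using h1, by simpa using h2, by simpa using h3⟩

lemma exists_distLe_formula (G : ZeroDefGraph L M) :
    ∃ θ : ℕ → L.Formula (Fin 2), ∀ (n : ℕ) (v : Fin 2 → M),
      (θ n).Realize v ↔ DistLe L M G n (v 0) (v 1) := by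
  have h : ∀ n : ℕ, ∃ φ : L.Formula (Fin 2), ∀ v : Fin 2 → M,
      φ.Realize v ↔ DistLe L M G n (v 0) (v 1) := fun n =>
    pure_formula_of_definable_empty (distLe_definable G n)
  exact ⟨fun n => (h n).choose, fun n => (h n).choose_spec⟩

lemma exists_V_formula (G : ZeroDefGraph L M) :
    ∃ θ : L.Formula (Fin 1), ∀ v : Fin 1 → M, θ.Realize v ↔ v 0 ∈ G.V :=
  pure_formula_of_definable_empty G.defV

/-- Automorphisms fixing `B` preserve realization of formulas over `B`. -/
lemma realize_fix {B : Set M} {γ : Type} (σ : M ≃[L] M) (hσ : FixesPointwise L M B σ)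
    (φ : L.Formula (↥B ⊕ γ)) (v : γ → M) :
    φ.Realize (Sum.elim Subtype.val (fun i => σ (v i))) ↔
      φ.Realize (Sum.elim Subtype.val v) := by
  have h := FirstOrder.Language.StrongHomClass.realize_formula σ (φ := φ)
    (v := Sum.elim Subtype.val v)
  rw [← h]
  have : (⇑σ ∘ Sum.elim (Subtype.val : ↥B → M) v)
      = Sum.elim (Subtype.val : ↥B → M) (fun i => σ (v i)) := by
    funext x
    rcases x with e | c
    · exact hσ e.1 e.2
    · rfl
  rw [this]

end Aux2
section Aux3

variable {L : FirstOrder.Language.{0,0}} {M : Type} [L.Structure M]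

/-- `y` realizes the formula `ψ` over `B`. -/
abbrev Rea {B : Set M} (ψ : L.Formula (↥B ⊕ Unit)) (y : M) : Prop :=
  ψ.Realize (Sum.elim Subtype.val fun _ => y)

variable {G : ZeroDefGraph L M}

lemma distLe_symm {n : ℕ} {x y : M} (h : DistLe L M G n x y) : DistLe L M G n y x := by
  obtain ⟨m, hm, hp⟩ := h; exact ⟨m, hm, gpath_symm hp⟩

lemma distLe_trans {n m : ℕ} {x y z : M} (h1 : DistLe L M G n x y) (h2 : DistLe L M G m y z) :
    DistLe L M G (n + m) x z := by
  obtain ⟨k, hk, hp⟩ := h1; obtain ⟨k', hk', hp'⟩ := h2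
  exact ⟨k + k', by omega, gpath_trans hp hp'⟩

/-- Key compactness lemma: if every formula of `tp(a/B)` together with the "bad" condition
`Θ N` is satisfiable, then there is a conjugate `b` of `a` over `B` satisfying all `Θ N`. -/
lemma key_conjugate {κ : Cardinal} (hM : IsMonster L M κ) (haleph : Cardinal.aleph0 ≤ κ)
    {B A : Set M} (hBA : B ⊆ A) (hA : #A < κ) (a : M)
    (Θ : ℕ → L.Formula (↥A ⊕ Fin 1))
    (hmono : ∀ (N N' : ℕ) (v : Fin 1 → M), N ≤ N' →
      (Θ N').Realize (Sum.elim Subtype.val v) → (Θ N).Realize (Sum.elim Subtype.val v))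
    (hsat : ∀ (ψ : L.Formula (↥B ⊕ Unit)) (N : ℕ), Rea ψ a →
      ∃ y : M, Rea ψ y ∧ (Θ N).Realize (Sum.elim Subtype.val fun _ : Fin 1 => y)) :
    ∃ (b : M) (σ : M ≃[L] M), FixesPointwise L M B σ ∧ σ a = b ∧
      ∀ N, (Θ N).Realize (Sum.elim Subtype.val fun _ : Fin 1 => b) := by
  classical
  set rr : ↥B ⊕ Unit → ↥A ⊕ Fin 1 := Sum.map (Set.inclusion hBA) (fun _ => (0 : Fin 1)) with hrr
  have hrel : ∀ (ψ : L.Formula (↥B ⊕ Unit)) (v : Fin 1 → M),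
      (ψ.relabel rr).Realize (Sum.elim Subtype.val v) ↔ Rea ψ (v 0) := by
    intro ψ v
    rw [Formula.realize_relabel, hrr, sum_elim_comp_map]
    have : (Subtype.val ∘ Set.inclusion hBA : ↥B → M) = Subtype.val := by
      funext e; rfl
    rw [this]
    exact Iff.rfl
  set S : Set (L.Formula (↥A ⊕ Fin 1)) :=
    {χ | ∃ ψ : L.Formula (↥B ⊕ Unit), Rea ψ a ∧ χ = ψ.relabel rr} ∪
    {χ | ∃ N : ℕ, χ = Θ N} with hS
  have hfs : ∀ s : Finset (L.Formula (↥A ⊕ Fin 1)), ↑s ⊆ S →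
      ∃ v : Fin 1 → M, ∀ χ ∈ s, χ.Realize (Sum.elim Subtype.val v) := by
    intro s hs
    set F : L.Formula (↥A ⊕ Fin 1) → L.Formula (↥B ⊕ Unit) := fun χ =>
      if h : ∃ ψ : L.Formula (↥B ⊕ Unit), Rea ψ a ∧ χ = ψ.relabel rr then h.choose else ⊤
      with hF
    set g : L.Formula (↥A ⊕ Fin 1) → ℕ := fun χ =>
      if h : ∃ N : ℕ, χ = Θ N then h.choose else 0 with hg
    have hΨa : Rea (finconj s F) a := by
      rw [Rea, realize_finconj]
      intro χ hχ
      by_cases h : ∃ ψ : L.Formula (↥B ⊕ Unit), Rea ψ a ∧ χ = ψ.relabel rr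
      · have hd : F χ = h.choose := dif_pos h
        rw [hd]
        exact h.choose_spec.1
      · have hd : F χ = ⊤ := dif_neg h
        rw [hd]
        exact Formula.realize_top.mpr trivial
    obtain ⟨y, hy, hyΘ⟩ := hsat (finconj s F) (s.sup g) hΨa
    refine ⟨fun _ => y, fun χ hχ => ?_⟩
    rcases hs hχ with h | h
    · have hspec := h.choose_spec
      rw [hspec.2, hrel]
      have hFχ : F χ = h.choose := dif_pos h
      rw [Rea, realize_finconj] at hy
      have := hy χ hχ
      rw [hFχ] at this
      exact this
    · have hspec := h.choose_spec
      have hgχ : g χ = h.choose := dif_pos h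
      rw [hspec]
      exact hmono _ _ _ (hgχ ▸ Finset.le_sup (f := g) hχ) hyΘ
  obtain ⟨v, hv⟩ := hM.saturated A hA 1 S hfs
  set b : M := v 0 with hb
  have hvb : v = fun _ : Fin 1 => b := by
    funext i
    rw [Fin.eq_zero i, hb]
  have hEq : EqTp L M B (fun _ : Unit => a) (fun _ => b) := by
    intro ψ
    constructor
    · intro hψ
      have : ψ.relabel rr ∈ S := Or.inl ⟨ψ, hψ, rfl⟩
      have := hv _ this
      rw [hrel] at this
      exact this
    · intro hψ
      by_contra hna
      have hnot : Rea (Formula.not ψ) a := Formula.realize_not.mpr hna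
      have : (Formula.not ψ).relabel rr ∈ S := Or.inl ⟨Formula.not ψ, hnot, rfl⟩
      have := hv _ this
      rw [hrel] at this
      exact Formula.realize_not.mp this hψ
  have hBsmall : #B < κ := lt_of_le_of_lt (Cardinal.mk_le_mk_of_subset hBA) hA
  have hUnit : #Unit < κ :=
    lt_of_lt_of_le (Cardinal.lt_aleph0_of_finite Unit) haleph
  obtain ⟨σ, hσfix, hσa⟩ := hM.homogeneous B Unit (fun _ => a) (fun _ => b) hBsmall hUnit hEq
  refine ⟨b, σ, hσfix, hσa (), fun N => ?_⟩
  have : Θ N ∈ S := Or.inr ⟨N, rfl⟩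
  have := hv _ this
  rwa [hvb] at this

end Aux3
theorem component_characterization
    (L : FirstOrder.Language.{0,0}) (M : Type) [L.Structure M] (κ : Cardinal)
    (hM : IsMonster L M κ) (hT : theoryCard L < κ)
    (B : Set M) (hB : #B < κ)
    (G : ZeroDefGraph L M) (a : M) (ha : a ∈ G.V) :
    (VDef L M G B a ↔ ∃ (φ : L.Formula (↥B ⊕ Unit)) (n : ℕ),
      φ.Realize (Sum.elim Subtype.val fun _ => a) ∧
      ∀ y y' : M, φ.Realize (Sum.elim Subtype.val fun _ => y) →
        φ.Realize (Sum.elim Subtype.val fun _ => y') → DistLe L M G n y y') ∧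
    (VAlg L M G B a ↔ ∃ ψ : L.Formula (↥B ⊕ Unit),
      ψ.Realize (Sum.elim Subtype.val fun _ => a) ∧
      (∃ (k : ℕ) (c : Fin k → M), ∀ y : M, ψ.Realize (Sum.elim Subtype.val fun _ => y) →
        ∃ i, SameComp L M G y (c i)) ∧
      (∀ y : M, ψ.Realize (Sum.elim Subtype.val fun _ => y) →
        ∃ σ : M ≃[L] M, FixesPointwise L M B σ ∧ SameComp L M G y (σ a)) ∧
      (∀ σ : M ≃[L] M, FixesPointwise L M B σ →
        ∃ y : M, ψ.Realize (Sum.elim Subtype.val fun _ => y) ∧ SameComp L M G y (σ a))) := by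
  classical
  obtain ⟨θ, hθ⟩ := exists_distLe_formula G
  obtain ⟨θV, hθV⟩ := exists_V_formula G
  have haleph : Cardinal.aleph0 ≤ κ := le_of_lt (lt_of_le_of_lt le_add_self hT)
  constructor
  · -- VDef characterization
    constructor
    · -- forward direction
      intro hvd
      by_contra hno
      push_neg at hno
      have hamem : a ∈ B ∪ {a} := Or.inr rfl
      have hAcard : #(B ∪ {a} : Set M) < κ := by
        apply lt_of_le_of_lt (Cardinal.mk_union_le _ _)
        refine Cardinal.add_lt_of_lt haleph hB ?_
        rw [Cardinal.mk_singleton]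
        exact lt_of_lt_of_le Cardinal.one_lt_aleph0 haleph
      set g0 : Fin 2 → ↥(B ∪ {a} : Set M) ⊕ Fin 1 :=
        ![Sum.inr 0, Sum.inl ⟨a, hamem⟩] with hg0
      have hΘ : ∀ (N : ℕ) (v : Fin 1 → M),
          (Formula.not ((θ N).relabel g0)).Realize (Sum.elim Subtype.val v) ↔
            ¬ DistLe L M G N (v 0) a := by
        intro N v
        rw [Formula.realize_not, Formula.realize_relabel, hθ]
        have h0 : ((Sum.elim (Subtype.val : ↥(B ∪ {a} : Set M) → M) v) ∘ g0) 0 = v 0 := by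
          simp [hg0]
        have h1 : ((Sum.elim (Subtype.val : ↥(B ∪ {a} : Set M) → M) v) ∘ g0) 1 = a := by
          simp [hg0]
        rw [h0, h1]
      have hmono : ∀ (N N' : ℕ) (v : Fin 1 → M), N ≤ N' →
          (Formula.not ((θ N').relabel g0)).Realize (Sum.elim Subtype.val v) →
          (Formula.not ((θ N).relabel g0)).Realize (Sum.elim Subtype.val v) := by
        intro N N' v hNN' h
        rw [hΘ] at h ⊢
        exact fun hdl => h (distLe_mono hNN' hdl)
      have hsat : ∀ (ψ : L.Formula (↥B ⊕ Unit)) (N : ℕ), Rea ψ a →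
          ∃ y : M, Rea ψ y ∧
            (Formula.not ((θ N).relabel g0)).Realize
              (Sum.elim Subtype.val fun _ : Fin 1 => y) := by
        intro ψ N hψa
        obtain ⟨y, y', hy, hy', hdist⟩ := hno ψ (N + N) hψa
        by_cases h : DistLe L M G N y a
        · refine ⟨y', hy', (hΘ N _).mpr fun hy'a => ?_⟩
          exact hdist (distLe_trans h (distLe_symm hy'a))
            |>.elim
        · exact ⟨y, hy, (hΘ N _).mpr h⟩
      obtain ⟨b, σ, hfix, hσab, hbΘ⟩ := key_conjugate hM haleph Set.subset_union_left
        hAcard a (fun N => Formula.not ((θ N).relabel g0)) hmono hsat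
      have hsc : SameComp L M G a b := by
        have := hvd σ hfix
        rwa [hσab] at this
      obtain ⟨n0, hn0⟩ := distLe_of_sameComp hsc
      exact (hΘ n0 _).mp (hbΘ n0) (distLe_symm hn0)
    · -- backward direction
      rintro ⟨φ, n, hφa, hdiam⟩ σ hσ
      have hφσa : φ.Realize (Sum.elim Subtype.val fun _ : Unit => σ a) :=
        (realize_fix σ hσ φ (fun _ => a)).mpr hφa
      exact sameComp_of_distLe (hdiam a (σ a) hφa hφσa)
  · -- VAlg characterization
    constructor
    · -- forward direction
      rintro ⟨k, c, hc⟩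
      set d : Fin k → M := fun i =>
        if h : ∃ σ : M ≃[L] M, FixesPointwise L M B σ ∧ SameComp L M G (σ a) (c i)
        then h.choose a else a with hd
      have hstar : ∀ σ : M ≃[L] M, FixesPointwise L M B σ →
          ∃ i, SameComp L M G (σ a) (d i) := by
        intro σ hσ
        obtain ⟨i, hi⟩ := hc σ hσ
        have hcond : ∃ σ' : M ≃[L] M, FixesPointwise L M B σ' ∧
            SameComp L M G (σ' a) (c i) := ⟨σ, hσ, hi⟩
        have hdi : d i = hcond.choose a := dif_pos hcond
        refine ⟨i, ?_⟩
        rw [hdi]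
        exact sameComp_trans hi (sameComp_symm hcond.choose_spec.2)
      have hstar2 : ∀ i, ∃ σ : M ≃[L] M, FixesPointwise L M B σ ∧ σ a = d i := by
        intro i
        by_cases h : ∃ σ' : M ≃[L] M, FixesPointwise L M B σ' ∧
            SameComp L M G (σ' a) (c i)
        · refine ⟨h.choose, h.choose_spec.1, ?_⟩
          have hh : d i = h.choose a := dif_pos h
          exact hh.symm
        · refine ⟨FirstOrder.Language.Equiv.refl L M, fun x _ => rfl, ?_⟩
          have : d i = a := dif_neg h
          rw [this]
          rfl
      have hdmem : ∀ j, d j ∈ B ∪ Set.range d := fun j => Or.inr ⟨j, rfl⟩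
      have hAcard : #(B ∪ Set.range d : Set M) < κ := by
        apply lt_of_le_of_lt (Cardinal.mk_union_le _ _)
        refine Cardinal.add_lt_of_lt haleph hB ?_
        exact lt_of_lt_of_le (lt_of_le_of_lt Cardinal.mk_range_le
          (Cardinal.lt_aleph0_of_finite (Fin k))) haleph
      set gj : Fin k → Fin 2 → ↥(B ∪ Set.range d : Set M) ⊕ Fin 1 :=
        fun j => ![Sum.inr 0, Sum.inl ⟨d j, hdmem j⟩] with hgj
      set Θ : ℕ → L.Formula (↥(B ∪ Set.range d : Set M) ⊕ Fin 1) := fun N =>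
        finconj Finset.univ
          (fun j : Fin k => Formula.not ((θ N).relabel (gj j))) with hΘdef
      have hΘ : ∀ (N : ℕ) (v : Fin 1 → M),
          (Θ N).Realize (Sum.elim Subtype.val v) ↔
            ∀ j, ¬ DistLe L M G N (v 0) (d j) := by
        intro N v
        simp only [hΘdef]
        rw [realize_finconj]
        have hjr : ∀ j : Fin k, ((Formula.not ((θ N).relabel (gj j))).Realize
            (Sum.elim Subtype.val v) ↔ ¬ DistLe L M G N (v 0) (d j)) := by
          intro j
          rw [Formula.realize_not, Formula.realize_relabel, hθ]
          have h0 : ((Sum.elim (Subtype.val : ↥(B ∪ Set.range d : Set M) → M) v) ∘ gj j) 0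
              = v 0 := by simp [hgj]
          have h1 : ((Sum.elim (Subtype.val : ↥(B ∪ Set.range d : Set M) → M) v) ∘ gj j) 1
              = d j := by simp [hgj]
          rw [h0, h1]
        constructor
        · intro h j
          exact (hjr j).mp (h j (Finset.mem_univ j))
        · intro h j _
          exact (hjr j).mpr (h j)
      have hclaim : ∃ (ψ : L.Formula (↥B ⊕ Unit)) (N : ℕ), Rea ψ a ∧
          ∀ y : M, Rea ψ y → ∃ j, DistLe L M G N y (d j) := by
        by_contra hno
        push_neg at hno
        have hsat : ∀ (ψ : L.Formula (↥B ⊕ Unit)) (N : ℕ), Rea ψ a →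
            ∃ y : M, Rea ψ y ∧ (Θ N).Realize (Sum.elim Subtype.val fun _ : Fin 1 => y) := by
          intro ψ N hψa
          obtain ⟨y, hy, hyj⟩ := hno ψ N hψa
          exact ⟨y, hy, (hΘ N _).mpr hyj⟩
        have hmono : ∀ (N N' : ℕ) (v : Fin 1 → M), N ≤ N' →
            (Θ N').Realize (Sum.elim Subtype.val v) →
            (Θ N).Realize (Sum.elim Subtype.val v) := by
          intro N N' v hNN' h
          rw [hΘ] at h ⊢
          exact fun j hdl => h j (distLe_mono hNN' hdl)
        obtain ⟨b, σ, hfix, hσab, hbΘ⟩ := key_conjugate hM haleph Set.subset_union_left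
          hAcard a Θ hmono hsat
        obtain ⟨i, hi⟩ := hstar σ hfix
        rw [hσab] at hi
        obtain ⟨n0, hn0⟩ := distLe_of_sameComp hi
        exact (hΘ n0 _).mp (hbΘ n0) i hn0
      obtain ⟨ψ, N, hψa, hcov⟩ := hclaim
      refine ⟨ψ, hψa, ⟨k, d, fun y hy => ?_⟩, fun y hy => ?_, fun σ hσ => ?_⟩
      · obtain ⟨j, hj⟩ := hcov y hy
        exact ⟨j, sameComp_of_distLe hj⟩
      · obtain ⟨j, hj⟩ := hcov y hy
        obtain ⟨σ, hσf, hσa⟩ := hstar2 j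
        refine ⟨σ, hσf, ?_⟩
        rw [hσa]
        exact sameComp_of_distLe hj
      · have hψσ : Rea ψ (σ a) := (realize_fix σ hσ ψ (fun _ => a)).mpr hψa
        have hσaV : σ a ∈ G.V := by
          have h := FirstOrder.Language.StrongHomClass.realize_formula σ (φ := θV)
            (v := fun _ : Fin 1 => a)
          rw [hθV, hθV] at h
          exact h.mpr ha
        exact ⟨σ a, hψσ, sameComp_refl hσaV⟩
    · -- backward direction
      rintro ⟨ψ, hψa, ⟨k, c, hcov⟩, -, -⟩
      refine ⟨k, c, fun σ hσ => ?_⟩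
      exact hcov (σ a) ((realize_fix σ hσ ψ (fun _ => a)).mpr hψa)

end Paper
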